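/- arXiv:2108.10240 — 3 statements merged into one kernel-verified Lean document; each statement's English description precedes it below -/
import Mathlib

section
/- Assume hypothesis (H2) with constants η, T₁, c. Then every Fourier solution φ of the free equation φ″ + Aφ = 0 on [0,T₁] with data (φ0,φ1) ∈ X_1 × X_{1/2} at time 0 satisfies c ∫₀^{T₁} ‖Cφ′(t)‖² dt ≥ Σ_{n≥1} λ_n^{−2/η}(λ_n⁴|(φ0)_n|² + λ_n²|(φ1)_n|²), i.e. the velocity observation through C controls the data in the norm of X_{1−1/(2η)} × X_{1/2−1/(2η)}. -/
open MeasureTheory Filter Topology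
open scoped ENNReal NNReal

noncomputable section

namespace SlowDecayLQ

variable {H : Type*} [NormedAddCommGroup H] [InnerProductSpace ℂ H] [CompleteSpace H]

/-- derivative of `normSq ∘ f`. -/
lemma normSq_hasDerivWithinAt {f : ℝ → ℂ} {f' : ℂ} {s : Set ℝ} {x : ℝ}
    (h : HasDerivWithinAt f f' s x) :
    HasDerivWithinAt (fun u => Complex.normSq (f u))
      (f'.re * (f x).re + (f x).re * f'.re + (f'.im * (f x).im + (f x).im * f'.im)) s x := by
  have hre : HasDerivWithinAt (fun u => (f u).re) f'.re s x :=
    (Complex.reCLM.hasFDerivAt.comp_hasDerivWithinAt x h)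
  have him : HasDerivWithinAt (fun u => (f u).im) f'.im s x :=
    (Complex.imCLM.hasFDerivAt.comp_hasDerivWithinAt x h)
  have := (hre.mul hre).add (him.mul him)
  simpa only [Complex.normSq_apply, Pi.mul_def, Pi.add_def] using this

lemma energy_const {T L : ℝ} (hT : 0 ≤ T) (a0 a1 : ℂ) {q p : ℝ → ℂ}
    (hip : ∀ t ∈ Set.Icc (0:ℝ) T, IntervalIntegrable p volume 0 t)
    (hiq : ∀ t ∈ Set.Icc (0:ℝ) T, IntervalIntegrable (fun s => -((L:ℂ)^2 * q s)) volume 0 t)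
    (hq : ∀ t ∈ Set.Icc (0:ℝ) T, q t = a0 + ∫ s in (0:ℝ)..t, p s)
    (hp : ∀ t ∈ Set.Icc (0:ℝ) T, p t = a1 + ∫ s in (0:ℝ)..t, -((L:ℂ)^2 * q s)) :
    ∀ t ∈ Set.Icc (0:ℝ) T,
      L^4 * ‖q t‖^2 + L^2 * ‖p t‖^2 = L^4 * ‖a0‖^2 + L^2 * ‖a1‖^2 := by
  have hTmem : T ∈ Set.Icc (0:ℝ) T := ⟨hT, le_refl T⟩
  set Q : ℝ → ℂ := fun u => a0 + ∫ s in (0:ℝ)..u, p s with hQdef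
  set P : ℝ → ℂ := fun u => a1 + ∫ s in (0:ℝ)..u, -((L:ℂ)^2 * q s) with hPdef
  have h0mem : (0:ℝ) ∈ Set.uIcc (0:ℝ) T := by
    rw [Set.uIcc_of_le hT]; exact Set.left_mem_Icc.2 hT
  have hQcont : ContinuousOn Q (Set.Icc 0 T) := by
    have := intervalIntegral.continuousOn_primitive_interval' (hip T hTmem) h0mem
    rw [Set.uIcc_of_le hT] at this
    exact continuousOn_const.add this
  have hPcont : ContinuousOn P (Set.Icc 0 T) := by
    have := intervalIntegral.continuousOn_primitive_interval' (hiq T hTmem) h0mem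
    rw [Set.uIcc_of_le hT] at this
    exact continuousOn_const.add this
  have hqeq : Set.EqOn q Q (Set.Icc 0 T) := fun t ht => hq t ht
  have hpeq : Set.EqOn p P (Set.Icc 0 T) := fun t ht => hp t ht
  have hqc : ContinuousOn q (Set.Icc 0 T) := hQcont.congr hqeq
  have hpc : ContinuousOn p (Set.Icc 0 T) := hPcont.congr hpeq
  have hqc2 : ContinuousOn (fun s => -((L:ℂ)^2 * q s)) (Set.Icc 0 T) :=
    (continuousOn_const.mul hqc).neg
  set E : ℝ → ℝ := fun u => L^4 * Complex.normSq (Q u) + L^2 * Complex.normSq (P u) with hEdef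
  have hEcont : ContinuousOn E (Set.Icc 0 T) :=
    (continuousOn_const.mul (Complex.continuous_normSq.comp_continuousOn hQcont)).add
      (continuousOn_const.mul (Complex.continuous_normSq.comp_continuousOn hPcont))
  have key : ∀ t ∈ Set.Icc (0:ℝ) T, E t = E 0 := by
    apply constant_of_has_deriv_right_zero hEcont
    intro x hx
    have hxI : x ∈ Set.Icc (0:ℝ) T := ⟨hx.1, hx.2.le⟩
    have hmemIoi : Set.Icc (0:ℝ) T ∈ 𝓝[Set.Ioi x] x := by
      refine Filter.mem_of_superset (Ioc_mem_nhdsGT_of_mem ⟨le_refl x, hx.2⟩) ?_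
      exact fun y hy => ⟨hx.1.trans hy.1.le, hy.2⟩
    have hmemIci : Set.Icc (0:ℝ) T ∈ 𝓝[Set.Ici x] x := by
      refine Filter.mem_of_superset (Icc_mem_nhdsGE_of_mem ⟨le_refl x, hx.2⟩) ?_
      exact fun y hy => ⟨hx.1.trans hy.1, hy.2⟩
    have hQd : HasDerivWithinAt Q (p x) (Set.Ici x) x := by
      refine HasDerivWithinAt.const_add _ ?_
      exact intervalIntegral.integral_hasDerivWithinAt_right (hip x hxI)
        ⟨Set.Icc 0 T, hmemIoi, hpc.aestronglyMeasurable measurableSet_Icc⟩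
        ((hpc.continuousWithinAt hxI).mono_of_mem_nhdsWithin hmemIoi)
    have hPd : HasDerivWithinAt P (-((L:ℂ)^2 * q x)) (Set.Ici x) x := by
      refine HasDerivWithinAt.const_add _ ?_
      exact intervalIntegral.integral_hasDerivWithinAt_right (hiq x hxI)
        ⟨Set.Icc 0 T, hmemIoi, hqc2.aestronglyMeasurable measurableSet_Icc⟩
        ((hqc2.continuousWithinAt hxI).mono_of_mem_nhdsWithin hmemIoi)
    have h1 := ((normSq_hasDerivWithinAt hQd).const_mul (L^4)).add
      ((normSq_hasDerivWithinAt hPd).const_mul (L^2))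
    convert h1 using 1
    · rfl
    have hcast : ((L:ℂ)^2) = ((L^2 : ℝ) : ℂ) := by push_cast; ring
    rw [hcast]
    simp only [Complex.neg_re, Complex.neg_im, Complex.mul_re, Complex.mul_im,
      Complex.ofReal_re, Complex.ofReal_im]
    rw [← hqeq hxI, ← hpeq hxI]
    ring
  have hE0 : E 0 = L^4 * Complex.normSq a0 + L^2 * Complex.normSq a1 := by
    simp [hEdef, hQdef, hPdef, intervalIntegral.integral_same]
  intro t ht
  have := key t ht
  rw [hE0] at this
  have h1 : ‖q t‖^2 = Complex.normSq (q t) := by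
    rw [← Complex.sq_norm]
  have h2 : ‖p t‖^2 = Complex.normSq (p t) := by
    rw [← Complex.sq_norm]
  have h3 : ‖a0‖^2 = Complex.normSq a0 := by rw [← Complex.sq_norm]
  have h4 : ‖a1‖^2 = Complex.normSq a1 := by rw [← Complex.sq_norm]
  rw [h1, h2, h3, h4, hqeq ht, hpeq ht]
  exact this


/-- The `n`-th Fourier coefficient of `x` with respect to the Hilbert basis `b`,
`x_n = ⟨x, φ_n⟩`. -/
def coef (b : HilbertBasis ℕ ℂ H) (x : H) (n : ℕ) : ℂ := b.repr x n

/-- Weighted squared norm `Σₙ μₙ (λₙ²|wₙ|² + |vₙ|²)`, valued in `ℝ≥0∞`. -/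
def wNormSq (lam : ℕ → ℝ) (b : HilbertBasis ℕ ℂ H) (μ : ℕ → ℝ) (w v : H) : ℝ≥0∞ :=
  ∑' n, ENNReal.ofReal (μ n * ((lam n) ^ 2 * ‖coef b w n‖ ^ 2 + ‖coef b v n‖ ^ 2))

/-- Squared energy norm `‖(w,v)‖_𝓗² = Σₙ (λₙ²|wₙ|² + |vₙ|²)`. -/
def HnormSq (lam : ℕ → ℝ) (b : HilbertBasis ℕ ℂ H) (w v : H) : ℝ≥0∞ :=
  wNormSq lam b (fun _ => 1) w v

/-- Squared norm `‖(w,v)‖_{D(𝓐^s)}² = Σₙ λₙ^{2s}(λₙ²|wₙ|² + |vₙ|²)`. -/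
def DAnormSq (lam : ℕ → ℝ) (b : HilbertBasis ℕ ℂ H) (s : ℝ) (w v : H) : ℝ≥0∞ :=
  wNormSq lam b (fun n => lam n ^ (2 * s)) w v

/-- Squared norm `‖(w,v)‖_{D(𝓐^s)'}² = Σₙ λₙ^{-2(s+1)}(λₙ²|wₙ|² + |vₙ|²)`. -/
def DAdualNormSq (lam : ℕ → ℝ) (b : HilbertBasis ℕ ℂ H) (s : ℝ) (w v : H) : ℝ≥0∞ :=
  wNormSq lam b (fun n => lam n ^ (-2 * (s + 1))) w v

/-- Squared norm `‖x‖_{X_β}² = Σₙ λₙ^{4β}|xₙ|²`. -/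
def XnormSq (lam : ℕ → ℝ) (b : HilbertBasis ℕ ℂ H) (β : ℝ) (x : H) : ℝ≥0∞ :=
  ∑' n, ENNReal.ofReal (lam n ^ (4 * β) * ‖coef b x n‖ ^ 2)

/-- `C` is a bounded linear operator from `X_{1/2}` to `H`:
`‖Cx‖² ≤ M ‖x‖_{X_{1/2}}²`. -/
def CBounded (lam : ℕ → ℝ) (b : HilbertBasis ℕ ℂ H) (Cop : H →ₗ[ℂ] H) : Prop :=
  ∃ M : ℝ, 0 ≤ M ∧ ∀ x : H,
    ((‖Cop x‖₊ : ℝ≥0∞)) ^ 2 ≤ ENNReal.ofReal M * XnormSq lam b (1 / 2) x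

/-- A Fourier solution of `w'' + Aw = f` on the interval `I` with data `(w0, w1)` at
time `t₀ ∈ I`: the coefficients `wₙ` are C¹ with locally absolutely continuous derivative
and satisfy `wₙ'' + λₙ² wₙ = fₙ` a.e. (encoded in integral form). -/
structure IsFourierSol (lam : ℕ → ℝ) (b : HilbertBasis ℕ ℂ H) (f : ℝ → ℕ → ℂ)
    (I : Set ℝ) (t₀ : ℝ) (w0 w1 : H) (w w' : ℝ → H) : Prop where
  intVel : ∀ n, ∀ t ∈ I, IntervalIntegrable (fun s => coef b (w' s) n) volume t₀ t
  intAcc : ∀ n, ∀ t ∈ I,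
    IntervalIntegrable (fun s => f s n - (lam n : ℂ) ^ 2 * coef b (w s) n) volume t₀ t
  posEq : ∀ n, ∀ t ∈ I, coef b (w t) n = coef b w0 n + ∫ s in t₀..t, coef b (w' s) n
  velEq : ∀ n, ∀ t ∈ I, coef b (w' t) n
      = coef b w1 n + ∫ s in t₀..t, (f s n - (lam n : ℂ) ^ 2 * coef b (w s) n)

/-- Zero forcing term (free wave equation). -/
def noForce : ℝ → ℕ → ℂ := fun _ _ => 0

/-- Weak observability of `(A, B*)` with weight `μ`: every finite-energy Fourier solution of
the free equation on `[0,T]` satisfies `c ∫₀ᵀ ‖B*w'(t)‖² dt ≥ Σₙ μₙ(λₙ²|(w0)ₙ|² + |(w1)ₙ|²)`. -/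
def ObsB (lam : ℕ → ℝ) (b : HilbertBasis ℕ ℂ H) (B : H →L[ℂ] H)
    (μ : ℕ → ℝ) (T c : ℝ) : Prop :=
  ∀ (w0 w1 : H) (w w' : ℝ → H),
    IsFourierSol lam b noForce (Set.Icc 0 T) 0 w0 w1 w w' →
    (∀ t ∈ Set.Icc 0 T, HnormSq lam b (w t) (w' t) < ⊤) →
    HnormSq lam b w0 w1 < ⊤ →
    wNormSq lam b μ w0 w1 ≤
      ENNReal.ofReal c *
        ∫⁻ t in Set.Ioc 0 T, (‖(ContinuousLinearMap.adjoint B) (w' t)‖₊ : ℝ≥0∞) ^ 2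

/-- Weak observability of `(A, C)` with weight `μ`: every finite-energy Fourier solution of
the free equation on `[0,T]` satisfies `c ∫₀ᵀ ‖Cw(t)‖² dt ≥ Σₙ μₙ(λₙ²|(w0)ₙ|² + |(w1)ₙ|²)`. -/
def ObsC (lam : ℕ → ℝ) (b : HilbertBasis ℕ ℂ H) (Cop : H →ₗ[ℂ] H)
    (μ : ℕ → ℝ) (T c : ℝ) : Prop :=
  ∀ (w0 w1 : H) (w w' : ℝ → H),
    IsFourierSol lam b noForce (Set.Icc 0 T) 0 w0 w1 w w' →
    (∀ t ∈ Set.Icc 0 T, HnormSq lam b (w t) (w' t) < ⊤) →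
    HnormSq lam b w0 w1 < ⊤ →
    wNormSq lam b μ w0 w1 ≤
      ENNReal.ofReal c * ∫⁻ t in Set.Ioc 0 T, (‖Cop (w t)‖₊ : ℝ≥0∞) ^ 2

/-- Hypothesis (H1): weak observability of `(A, B*)` with weight `λₙ^{-2/ρ}`. -/
def H1Hyp (lam : ℕ → ℝ) (b : HilbertBasis ℕ ℂ H) (B : H →L[ℂ] H) (ρ T₀ c : ℝ) : Prop :=
  ObsB lam b B (fun n => lam n ^ (-2 / ρ)) T₀ c

/-- Hypothesis (H2): weak observability of `(A, C)` with weight `λₙ^{-2/η}`. -/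
def H2Hyp (lam : ℕ → ℝ) (b : HilbertBasis ℕ ℂ H) (Cop : H →ₗ[ℂ] H) (η T₁ c : ℝ) : Prop :=
  ObsC lam b Cop (fun n => lam n ^ (-2 / η)) T₁ c

/-- The quadratic cost `½ ∫_S (‖u(t)‖² + ‖Cw(t)‖²) dt`. -/
def cost (Cop : H →ₗ[ℂ] H) (S : Set ℝ) (u w : ℝ → H) : ℝ≥0∞ :=
  2⁻¹ * ∫⁻ t in S, ((‖u t‖₊ : ℝ≥0∞) ^ 2 + (‖Cop (w t)‖₊ : ℝ≥0∞) ^ 2)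

/-- The finite-horizon value function `V_T(w0,w1)`. -/
def ValueFin (lam : ℕ → ℝ) (b : HilbertBasis ℕ ℂ H) (B : H →L[ℂ] H) (Cop : H →ₗ[ℂ] H)
    (T : ℝ) (w0 w1 : H) : ℝ≥0∞ :=
  sInf { J : ℝ≥0∞ | ∃ u w w' : ℝ → H,
    IsFourierSol lam b (fun t n => coef b (B (u t)) n) (Set.Icc 0 T) 0 w0 w1 w w' ∧
    (∀ t ∈ Set.Icc 0 T, HnormSq lam b (w t) (w' t) < ⊤) ∧
    J = cost Cop (Set.Ioc 0 T) u w }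

/-- The infinite-horizon value function `V_∞(w0,w1)`. -/
def ValueInf (lam : ℕ → ℝ) (b : HilbertBasis ℕ ℂ H) (B : H →L[ℂ] H) (Cop : H →ₗ[ℂ] H)
    (w0 w1 : H) : ℝ≥0∞ :=
  sInf { J : ℝ≥0∞ | ∃ u w w' : ℝ → H,
    IsFourierSol lam b (fun t n => coef b (B (u t)) n) (Set.Ici 0) 0 w0 w1 w w' ∧
    (∀ t ∈ Set.Ici (0 : ℝ), HnormSq lam b (w t) (w' t) < ⊤) ∧
    J = cost Cop (Set.Ioi 0) u w }

/-- A Bellman-optimal control–trajectory pair for `V_∞` with data `(w0,w1)`. -/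
def BellmanOptimal (lam : ℕ → ℝ) (b : HilbertBasis ℕ ℂ H) (B : H →L[ℂ] H) (Cop : H →ₗ[ℂ] H)
    (w0 w1 : H) (u w w' : ℝ → H) : Prop :=
  IsFourierSol lam b (fun t n => coef b (B (u t)) n) (Set.Ici 0) 0 w0 w1 w w' ∧
  (∀ t ∈ Set.Ici (0 : ℝ), HnormSq lam b (w t) (w' t) < ⊤) ∧
  ∀ τ : ℝ, 0 ≤ τ → cost Cop (Set.Ioi τ) u w = ValueInf lam b B Cop (w τ) (w' τ)

/-- A stationary optimal triple `(w̄, ū, p̄)` for the target `z`. -/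
structure StationaryTriple (lam : ℕ → ℝ) (b : HilbertBasis ℕ ℂ H) (B : H →L[ℂ] H)
    (Cop : H →ₗ[ℂ] H) (z wbar ubar pbar : H) : Prop where
  memw : XnormSq lam b 1 wbar < ⊤
  memp : XnormSq lam b 1 pbar < ⊤
  stateEq : ∀ n, (lam n : ℂ) ^ 2 * coef b wbar n = coef b (B ubar) n
  adjEq : ∀ n, (lam n : ℂ) ^ 2 * coef b pbar n = (inner ℂ (Cop (b n)) (Cop wbar - z) : ℂ)
  ctrlEq : ubar = -(ContinuousLinearMap.adjoint B) pbar

/-- A finite-horizon optimality-system triple on `[0,T]` for target `z` with data `(w0,w1)`. -/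
structure OSTriple (lam : ℕ → ℝ) (b : HilbertBasis ℕ ℂ H) (B : H →L[ℂ] H)
    (Cop : H →ₗ[ℂ] H) (z : H) (T : ℝ) (w0 w1 : H) (w w' u p p' : ℝ → H) : Prop where
  adjSol : IsFourierSol lam b (fun t n => (inner ℂ (Cop (b n)) (Cop (w t) - z) : ℂ))
      (Set.Icc 0 T) T 0 0 p p'
  adjMem : ∀ t ∈ Set.Icc 0 T, HnormSq lam b (p t) (p' t) < ⊤
  ctrlEq : ∀ t, u t = -(ContinuousLinearMap.adjoint B) (p t)
  stateSol : IsFourierSol lam b (fun t n => coef b (B (u t)) n) (Set.Icc 0 T) 0 w0 w1 w w'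
  stateMem : ∀ t ∈ Set.Icc 0 T, HnormSq lam b (w t) (w' t) < ⊤

/-- `g(T) = ((T+1)^{1-r} - 1)/(1-r)` if `r ≠ 1`, `g(T) = log(T+1)` if `r = 1`. -/
def gfun (r T : ℝ) : ℝ :=
  if r = 1 then Real.log (T + 1) else ((T + 1) ^ (1 - r) - 1) / (1 - r)

/-- A coefficientwise (relaxed-regularity) Fourier solution of `w'' + Aw = f`. -/
structure IsCoefSol (lam : ℕ → ℝ) (f : ℝ → ℕ → ℂ) (I : Set ℝ) (t₀ : ℝ)
    (a0 a1 : ℕ → ℂ) (q q' : ℝ → ℕ → ℂ) : Prop where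
  intVel : ∀ n, ∀ t ∈ I, IntervalIntegrable (fun s => q' s n) volume t₀ t
  intAcc : ∀ n, ∀ t ∈ I, IntervalIntegrable (fun s => f s n - (lam n : ℂ) ^ 2 * q s n) volume t₀ t
  posEq : ∀ n, ∀ t ∈ I, q t n = a0 n + ∫ s in t₀..t, q' s n
  velEq : ∀ n, ∀ t ∈ I, q' t n = a1 n + ∫ s in t₀..t, (f s n - (lam n : ℂ) ^ 2 * q s n)


lemma statement2_norm_sq (L : ℝ) (hL : 0 < L) (z : ℂ) :
    ‖-((L:ℂ)^2 * z)‖^2 = L^4 * ‖z‖^2 := by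
  rw [norm_neg, norm_mul, norm_pow, Complex.norm_real, Real.norm_eq_abs, abs_of_pos hL]
  ring

/-- under (H2), the velocity observation through `C` of free solutions with
data in `X_1 × X_{1/2}` controls the data in the norm of `X_{1-1/(2η)} × X_{1/2-1/(2η)}`. -/
theorem statement2
    (b : HilbertBasis ℕ ℂ H) (lam : ℕ → ℝ)
    (hlam : ∀ n, 0 < lam n) (hlamTop : Tendsto lam atTop atTop)
    (Cop : H →ₗ[ℂ] H) (hCB : CBounded lam b Cop)
    (η T₁ c : ℝ) (hη : 0 < η) (hT₁ : 0 < T₁) (hc : 0 < c)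
    (hH2 : H2Hyp lam b Cop η T₁ c)
    (φ0 φ1 : H) (hφ0 : XnormSq lam b 1 φ0 < ⊤) (hφ1 : XnormSq lam b (1 / 2) φ1 < ⊤)
    (φ φ' : ℝ → H)
    (hsol : IsFourierSol lam b noForce (Set.Icc 0 T₁) 0 φ0 φ1 φ φ')
    (hmem : ∀ t ∈ Set.Icc 0 T₁, HnormSq lam b (φ t) (φ' t) < ⊤) :
    (∑' n, ENNReal.ofReal (lam n ^ (-2 / η) *
        ((lam n) ^ 4 * ‖coef b φ0 n‖ ^ 2 + (lam n) ^ 2 * ‖coef b φ1 n‖ ^ 2))) ≤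
      ENNReal.ofReal c * ∫⁻ t in Set.Ioc 0 T₁, (‖Cop (φ' t)‖₊ : ℝ≥0∞) ^ 2 := by
  classical
  -- clean coefficient equations
  have hip : ∀ n, ∀ t ∈ Set.Icc (0:ℝ) T₁,
      IntervalIntegrable (fun s => coef b (φ' s) n) volume 0 t := hsol.intVel
  have hiq : ∀ n, ∀ t ∈ Set.Icc (0:ℝ) T₁,
      IntervalIntegrable (fun s => -(((lam n : ℝ):ℂ)^2 * coef b (φ s) n)) volume 0 t := by
    intro n t ht
    simpa [noForce, zero_sub] using hsol.intAcc n t ht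
  have hq : ∀ n, ∀ t ∈ Set.Icc (0:ℝ) T₁,
      coef b (φ t) n = coef b φ0 n + ∫ s in (0:ℝ)..t, coef b (φ' s) n := hsol.posEq
  have hp : ∀ n, ∀ t ∈ Set.Icc (0:ℝ) T₁,
      coef b (φ' t) n = coef b φ1 n
        + ∫ s in (0:ℝ)..t, -(((lam n : ℝ):ℂ)^2 * coef b (φ s) n) := by
    intro n t ht
    simpa [noForce, zero_sub] using hsol.velEq n t ht
  have hE : ∀ n, ∀ t ∈ Set.Icc (0:ℝ) T₁,
      (lam n)^4 * ‖coef b (φ t) n‖^2 + (lam n)^2 * ‖coef b (φ' t) n‖^2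
        = (lam n)^4 * ‖coef b φ0 n‖^2 + (lam n)^2 * ‖coef b φ1 n‖^2 := fun n =>
    energy_const hT₁.le (coef b φ0 n) (coef b φ1 n) (hip n) (hiq n) (hq n) (hp n)
  set S : ℕ → ℝ := fun n =>
    (lam n)^4 * ‖coef b φ0 n‖^2 + (lam n)^2 * ‖coef b φ1 n‖^2 with hSdef
  have hSnn : ∀ n, 0 ≤ S n := fun n => by positivity
  have hX0 : (∑' n, ENNReal.ofReal ((lam n)^4 * ‖coef b φ0 n‖^2)) < ⊤ := by
    refine lt_of_eq_of_lt (Eq.symm ?_) hφ0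
    unfold XnormSq
    refine tsum_congr fun n => ?_
    rw [show ((4:ℝ) * (1:ℝ)) = ((4:ℕ):ℝ) by norm_num, Real.rpow_natCast]
  have hX1 : (∑' n, ENNReal.ofReal ((lam n)^2 * ‖coef b φ1 n‖^2)) < ⊤ := by
    refine lt_of_eq_of_lt (Eq.symm ?_) hφ1
    unfold XnormSq
    refine tsum_congr fun n => ?_
    rw [show ((4:ℝ) * ((1:ℝ)/2)) = ((2:ℕ):ℝ) by norm_num, Real.rpow_natCast]
  have hSsum : (∑' n, ENNReal.ofReal (S n)) < ⊤ := by
    have heq : (∑' n, ENNReal.ofReal (S n))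
        = (∑' n, ENNReal.ofReal ((lam n)^4 * ‖coef b φ0 n‖^2))
          + (∑' n, ENNReal.ofReal ((lam n)^2 * ‖coef b φ1 n‖^2)) := by
      rw [← ENNReal.tsum_add]
      refine tsum_congr fun n => ?_
      rw [← ENNReal.ofReal_add (by positivity) (by positivity)]
    rw [heq]
    exact ENNReal.add_lt_top.2 ⟨hX0, hX1⟩
  have hSsummable : Summable S := by
    have h := ENNReal.summable_toReal hSsum.ne
    exact h.congr fun n => ENNReal.toReal_ofReal (hSnn n)
  have hpow2 : ((2:ℝ≥0∞).toReal) = ((2:ℕ):ℝ) := by simp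
  -- the element w1 with coefficients -λₙ² (φ0)ₙ
  have hmem1 : Memℓp (fun n => -(((lam n : ℝ):ℂ)^2 * coef b φ0 n)) 2 := by
    apply memℓp_gen
    refine Summable.of_nonneg_of_le (fun n => ?_) (fun n => ?_) hSsummable
    · positivity
    · rw [hpow2, Real.rpow_natCast, statement2_norm_sq (lam n) (hlam n)]
      have h2 : 0 ≤ (lam n)^2 * ‖coef b φ1 n‖^2 := by positivity
      simp only [hSdef]
      linarith
  set w1 : H := b.repr.symm ⟨fun n => -(((lam n : ℝ):ℂ)^2 * coef b φ0 n), hmem1⟩ with hw1def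
  have hw1 : ∀ n, coef b w1 n = -(((lam n : ℝ):ℂ)^2 * coef b φ0 n) := by
    intro n
    show b.repr w1 n = _
    rw [hw1def, LinearIsometryEquiv.apply_symm_apply]
    try rfl
  -- the velocity v with coefficients -λₙ² φₙ(t)
  have memv : ∀ t, t ∈ Set.Icc (0:ℝ) T₁ →
      Memℓp (fun n => -(((lam n : ℝ):ℂ)^2 * coef b (φ t) n)) 2 := by
    intro t ht
    apply memℓp_gen
    refine Summable.of_nonneg_of_le (fun n => ?_) (fun n => ?_) hSsummable
    · positivity
    · rw [hpow2, Real.rpow_natCast, statement2_norm_sq (lam n) (hlam n)]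
      have h2 : 0 ≤ (lam n)^2 * ‖coef b (φ' t) n‖^2 := by positivity
      have := hE n t ht
      simp only [hSdef]
      linarith
  set v : ℝ → H := fun t => if ht : t ∈ Set.Icc (0:ℝ) T₁ then
      b.repr.symm ⟨fun n => -(((lam n : ℝ):ℂ)^2 * coef b (φ t) n), memv t ht⟩ else 0 with hvdef
  have hv : ∀ t ∈ Set.Icc (0:ℝ) T₁, ∀ n,
      coef b (v t) n = -(((lam n : ℝ):ℂ)^2 * coef b (φ t) n) := by
    intro t ht n
    show b.repr (v t) n = _
    rw [hvdef]
    simp only [dif_pos ht]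
    rw [LinearIsometryEquiv.apply_symm_apply]
    try rfl
  -- the shifted solution
  have sol' : IsFourierSol lam b noForce (Set.Icc 0 T₁) 0 φ1 w1 φ' v := by
    constructor
    · intro n t ht
      have hbase := hiq n t ht
      rw [intervalIntegrable_iff] at hbase ⊢
      refine hbase.congr_fun (fun s hs => ?_) measurableSet_uIoc
      have hsI : s ∈ Set.Icc (0:ℝ) T₁ := by
        rw [Set.uIoc_of_le ht.1] at hs
        exact ⟨hs.1.le, hs.2.trans ht.2⟩
      exact (hv s hsI n).symm
    · intro n t ht
      have h1 := ((hip n t ht).const_mul (((lam n : ℝ):ℂ)^2)).neg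
      simpa [noForce, zero_sub, Pi.neg_def] using h1
    · intro n t ht
      rw [hp n t ht]
      congr 1
      refine intervalIntegral.integral_congr fun s hs => ?_
      have hsI : s ∈ Set.Icc (0:ℝ) T₁ := by
        rw [Set.uIcc_of_le ht.1] at hs
        exact ⟨hs.1, hs.2.trans ht.2⟩
      exact (hv s hsI n).symm
    · intro n t ht
      rw [hv t ht n, hw1 n]
      have hint : (∫ s in (0:ℝ)..t, (noForce s n - ((lam n : ℝ):ℂ)^2 * coef b (φ' s) n))
          = -(((lam n : ℝ):ℂ)^2) * ∫ s in (0:ℝ)..t, coef b (φ' s) n := by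
        rw [← intervalIntegral.integral_const_mul]
        simp only [noForce, zero_sub, neg_mul]
      rw [hint, hq n t ht]
      ring
  -- finiteness of the shifted energies
  have mem' : ∀ t ∈ Set.Icc (0:ℝ) T₁, HnormSq lam b (φ' t) (v t) < ⊤ := by
    intro t ht
    have heq : HnormSq lam b (φ' t) (v t) = ∑' n, ENNReal.ofReal (S n) := by
      unfold HnormSq wNormSq
      refine tsum_congr fun n => ?_
      rw [hv t ht n, statement2_norm_sq (lam n) (hlam n)]
      congr 1
      have := hE n t ht
      simp only [hSdef]
      rw [one_mul]
      linarith
    rw [heq]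
    exact hSsum
  have fin' : HnormSq lam b φ1 w1 < ⊤ := by
    have heq : HnormSq lam b φ1 w1 = ∑' n, ENNReal.ofReal (S n) := by
      unfold HnormSq wNormSq
      refine tsum_congr fun n => ?_
      rw [hw1 n, statement2_norm_sq (lam n) (hlam n)]
      congr 1
      simp only [hSdef]
      ring
    rw [heq]
    exact hSsum
  have hfinal := hH2 φ1 w1 φ' v sol' mem' fin'
  have hgoal : (∑' n, ENNReal.ofReal (lam n ^ (-2 / η) *
        ((lam n) ^ 4 * ‖coef b φ0 n‖ ^ 2 + (lam n) ^ 2 * ‖coef b φ1 n‖ ^ 2)))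
      = wNormSq lam b (fun n => lam n ^ (-2 / η)) φ1 w1 := by
    unfold wNormSq
    refine tsum_congr fun n => ?_
    rw [hw1 n, statement2_norm_sq (lam n) (hlam n)]
    congr 1
    ring
  rw [hgoal]
  exact hfinal


end SlowDecayLQ
end
end

section
/- Let (a_m)_{m≥1} be a sequence of positive real numbers and let C > 0 and α > −1 be constants such that a_{m+1} ≤ a_m − C (a_{m+1})^{2+α} for all m ≥ 1. Then there exists a positive constant M (depending only on C and α) such that a_m ≤ M / (m+1)^{1/(1+α)} for all m ≥ 1. -/
open MeasureTheory Filter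
open scoped ENNReal NNReal

noncomputable section

namespace SlowDecayLQ

variable {H : Type*} [NormedAddCommGroup H] [InnerProductSpace ℂ H] [CompleteSpace H]

set_option maxHeartbeats 1000000 in
/-- the discrete weighted decay lemma of Ammari–Tucsnak:
`a_{m+1} ≤ a_m - C a_{m+1}^{2+α}` implies `a_m ≤ M (m+1)^{-1/(1+α)}`. -/
theorem statement14 (C α : ℝ) (hC : 0 < C) (hα : -1 < α) (a : ℕ → ℝ)
    (hpos : ∀ m : ℕ, 1 ≤ m → 0 < a m)
    (hrec : ∀ m : ℕ, 1 ≤ m → a (m + 1) ≤ a m - C * a (m + 1) ^ (2 + α)) :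
    ∃ M : ℝ, 0 < M ∧ ∀ m : ℕ, 1 ≤ m →
      a m ≤ M / ((m : ℝ) + 1) ^ ((1 : ℝ) / (1 + α)) := by
  have hβ : (0:ℝ) < 1 + α := by linarith
  have hβne : (1+α) ≠ 0 := ne_of_gt hβ
  set s : ℝ := 1 / (1 + α) with hs_def
  have hs : 0 < s := by positivity
  obtain ⟨k, hk_def⟩ : ∃ k : ℕ, k = ⌈s⌉₊ := ⟨_, rfl⟩
  have hsk : s ≤ (k : ℝ) := by rw [hk_def]; exact Nat.le_ceil s
  have hk1 : 1 ≤ k := by rw [hk_def]; exact Nat.one_le_ceil_iff.mpr hs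
  obtain ⟨K, hK_def⟩ : ∃ K : ℝ, K = (2:ℝ)^k - 1 := ⟨_, rfl⟩
  have hK1 : 1 ≤ K := by
    have h2 : (2:ℝ)^1 ≤ (2:ℝ)^k := pow_le_pow_right₀ one_le_two hk1
    rw [pow_one] at h2
    rw [hK_def]; linarith
  have hpow : ∀ (x:ℝ), 0 ≤ x → x ≤ 1 → ∀ n:ℕ, (1+x)^n ≤ 1 + ((2:ℝ)^n - 1)*x := by
    intro x h0 h1 n
    induction n with
    | zero => simp
    | succ n ih =>
      have h2n : (1:ℝ) ≤ 2^n := one_le_pow₀ one_le_two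
      have h3 : (1+x)^n * (1+x) ≤ (1 + ((2:ℝ)^n - 1)*x) * (1+x) :=
        mul_le_mul_of_nonneg_right ih (by linarith)
      have hxx : x*x ≤ x := by nlinarith
      rw [pow_succ, pow_succ]
      nlinarith [mul_le_mul_of_nonneg_left hxx (by linarith : (0:ℝ) ≤ 2^n - 1)]
  have hBern : ∀ x:ℝ, 0 ≤ x → x ≤ 1 → (1+x)^s ≤ 1 + K*x := by
    intro x h0 h1
    have h1x : (1:ℝ) ≤ 1 + x := by linarith
    calc (1+x)^s ≤ (1+x)^(k:ℝ) := Real.rpow_le_rpow_of_exponent_le h1x hsk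
      _ = (1+x)^k := Real.rpow_natCast _ k
      _ ≤ 1 + ((2:ℝ)^k - 1)*x := hpow x h0 h1 k
      _ = 1 + K*x := by rw [hK_def]
  obtain ⟨M, hM_def⟩ : ∃ M : ℝ,
      M = max (a 1 * (2:ℝ)^s) (max ((2*K/C)^s) 1) := ⟨_, rfl⟩
  have hM : 0 < M := by
    rw [hM_def]
    exact lt_of_lt_of_le one_pos (le_max_of_le_right (le_max_right _ _))
  have hMa : a 1 * (2:ℝ)^s ≤ M := by rw [hM_def]; exact le_max_left _ _
  have hM2K : (2*K/C)^s ≤ M := by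
    rw [hM_def]; exact le_trans (le_max_left _ _) (le_max_right _ _)
  have h2K : 2*K ≤ C * M^(1+α) := by
    have h0 : (0:ℝ) ≤ 2*K/C := by positivity
    have hmono : ((2*K/C)^s)^(1+α) ≤ M^(1+α) :=
      Real.rpow_le_rpow (Real.rpow_nonneg h0 s) hM2K hβ.le
    have heq : ((2*K/C)^s)^(1+α) = 2*K/C := by
      rw [← Real.rpow_mul h0]
      have hone : s * (1+α) = 1 := by rw [hs_def]; field_simp
      rw [hone, Real.rpow_one]
    rw [heq, div_le_iff₀ hC] at hmono
    linarith
  have hss : s * (2+α) = 1 + s := by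
    rw [hs_def]; field_simp; ring
  have hkey : ∀ m:ℕ, M/((m:ℝ)+1)^s ≤ M/((m:ℝ)+2)^s + C*(M/((m:ℝ)+2)^s)^(2+α) := by
    intro m
    obtain ⟨t, ht_def⟩ : ∃ t : ℝ, t = (m:ℝ)+1 := ⟨_, rfl⟩
    have ht : 1 ≤ t := by
      rw [ht_def]; have := Nat.cast_nonneg (α := ℝ) m; linarith
    have ht2 : (m:ℝ)+2 = t+1 := by rw [ht_def]; ring
    rw [← ht_def, ht2]
    have ht0 : 0 < t := by linarith
    have ht1 : 0 < t+1 := by linarith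
    have hts : 0 < t^s := Real.rpow_pos_of_pos ht0 s
    have ht1s : 0 < (t+1)^s := Real.rpow_pos_of_pos ht1 s
    have hR : (M/(t+1)^s)^(2+α) = (M*M^(1+α))/((t+1)*(t+1)^s) := by
      rw [Real.div_rpow hM.le ht1s.le, ← Real.rpow_mul ht1.le, hss]
      have hM2 : M^((2:ℝ)+α) = M * M^(1+α) := by
        have he : (2:ℝ)+α = 1 + (1+α) := by ring
        rw [he, Real.rpow_add hM, Real.rpow_one]
      have ht1e : (t+1)^((1:ℝ)+s) = (t+1) * (t+1)^s := by
        rw [Real.rpow_add ht1, Real.rpow_one]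
      rw [hM2, ht1e]
    rw [hR]
    have hx0 : (0:ℝ) ≤ 1/t := by positivity
    have hx1 : 1/t ≤ 1 := by rw [div_le_one ht0]; linarith
    have hB := hBern (1/t) hx0 hx1
    have hsplit : (t+1)^s = t^s * (1+1/t)^s := by
      rw [← Real.mul_rpow ht0.le (by positivity)]
      congr 1; field_simp
    have hQ : (t+1)^s ≤ t^s * (1 + K/t) := by
      rw [hsplit]
      calc t^s*(1+1/t)^s ≤ t^s*(1+K*(1/t)) :=
            mul_le_mul_of_nonneg_left hB hts.le
        _ = t^s*(1+K/t) := by ring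
    have hMain : (t+1)^s * (t+1) ≤ t^s*(t+1) + C*M^(1+α)*t^s := by
      have hmul : (t+1)^s * (t+1) ≤ (t^s * (1 + K/t)) * (t+1) :=
        mul_le_mul_of_nonneg_right hQ (by linarith)
      have hKt : K/t*(t+1) ≤ 2*K := by
        rw [div_mul_eq_mul_div, div_le_iff₀ ht0]
        nlinarith
      have h1 : t^s * (K/t*(t+1)) ≤ t^s * (2*K) :=
        mul_le_mul_of_nonneg_left hKt hts.le
      have h2 : t^s * (2*K) ≤ t^s * (C*M^(1+α)) :=
        mul_le_mul_of_nonneg_left h2K hts.le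
      nlinarith [hmul]
    -- make the rpow atoms opaque
    obtain ⟨u, hu_def⟩ : ∃ u : ℝ, u = t^s := ⟨_, rfl⟩
    obtain ⟨v, hv_def⟩ : ∃ v : ℝ, v = (t+1)^s := ⟨_, rfl⟩
    obtain ⟨N, hN_def⟩ : ∃ N : ℝ, N = M^(1+α) := ⟨_, rfl⟩
    rw [← hu_def, ← hv_def, ← hN_def] at hMain ⊢
    rw [← hu_def] at hts
    rw [← hv_def] at ht1s
    have hcomb : M/v + C * ((M*N)/((t+1)*v))
        = (M*(t+1) + C*(M*N))/((t+1)*v) := by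
      field_simp
    rw [hcomb, div_le_div_iff₀ hts (mul_pos ht1 ht1s)]
    have hfin := mul_le_mul_of_nonneg_left hMain hM.le
    ring_nf at hfin ⊢
    linarith
  refine ⟨M, hM, ?_⟩
  intro m
  induction m with
  | zero => intro h; exact absurd h (by norm_num)
  | succ n ih =>
    intro _
    rcases Nat.eq_zero_or_pos n with rfl | hn
    · have hc : (((0:ℕ)+1:ℕ):ℝ)+1 = 2 := by norm_num
      rw [hc, le_div_iff₀ (Real.rpow_pos_of_pos two_pos s)]
      exact hMa
    · have ihn := ih hn
      have hc : (((n+1:ℕ)):ℝ)+1 = (n:ℝ)+2 := by push_cast; ring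
      rw [hc]
      by_contra hcon
      push_neg at hcon
      have hφpos : 0 < M/((n:ℝ)+2)^s := by positivity
      have h1 := hrec n hn
      have hmono : C*(M/((n:ℝ)+2)^s)^(2+α) < C*(a (n+1))^(2+α) := by
        apply mul_lt_mul_of_pos_left _ hC
        exact Real.rpow_lt_rpow hφpos.le hcon (by linarith)
      have hk2 := hkey n
      obtain ⟨P, hP⟩ : ∃ P : ℝ, P = M/((n:ℝ)+1)^s := ⟨_, rfl⟩
      obtain ⟨Q, hQ⟩ : ∃ Q : ℝ, Q = M/((n:ℝ)+2)^s := ⟨_, rfl⟩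
      obtain ⟨R1, hR1⟩ : ∃ R1 : ℝ, R1 = C*(M/((n:ℝ)+2)^s)^(2+α) := ⟨_, rfl⟩
      obtain ⟨R2, hR2⟩ : ∃ R2 : ℝ, R2 = C*(a (n+1))^(2+α) := ⟨_, rfl⟩
      rw [← hP] at ihn
      rw [← hQ] at hcon
      rw [← hR1, ← hR2] at hmono
      rw [← hR1, ← hP, ← hQ] at hk2
      have h1' : a (n+1) ≤ a n - R2 := by rw [hR2]; exact h1
      linarith


end SlowDecayLQ
end
end

section
/- Let F : [0,∞) → [0,∞) be nonincreasing and suppose there exist constants C > 0, α > −1 and σ > 0 such that F(t + σ) ≤ F(t) − C · F(t + σ)^{2+α} for all t ≥ 0. Then there exists a constant M > 0, depending only on C, α and σ, such that F(t) ≤ M (t+1)^{−1/(1+α)} for all t ≥ 0. -/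
open MeasureTheory Filter
open scoped ENNReal NNReal

noncomputable section

namespace SlowDecayLQ

variable {H : Type*} [NormedAddCommGroup H] [InnerProductSpace ℂ H] [CompleteSpace H]

private lemma key_ineq {γ K x : ℝ} (hγ : 0 < γ) (hx : 0 ≤ x) (hxK : x ≤ K) :
    γ * (1 + K) ^ (-(γ + 1)) * x ≤ 1 - (1 + x) ^ (-γ) := by
  have hK : 0 ≤ K := hx.trans hxK
  have h1x : (0:ℝ) < 1 + x := by linarith
  have h1K : (0:ℝ) < 1 + K := by linarith
  have h1xK : 1 + x ≤ 1 + K := by linarith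
  have hA : 0 < (1 + x) ^ γ := Real.rpow_pos_of_pos h1x γ
  have hB : 0 < (1 + K) ^ γ := Real.rpow_pos_of_pos h1K γ
  have hAB : (1 + x) ^ γ ≤ (1 + K) ^ γ := Real.rpow_le_rpow h1x.le h1xK hγ.le
  have hcore : γ * x / (1 + K) ≤ (1 + x) ^ γ - 1 := by
    rcases le_or_gt 1 γ with hγ1 | hγ1
    · have hb := one_add_mul_self_le_rpow_one_add (s := x) (by linarith) hγ1
      have h2 : γ * x / (1 + K) ≤ γ * x :=
        div_le_self (by positivity) (by linarith)
      linarith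
    · have hb := rpow_one_add_le_one_add_mul_self (s := x) (by linarith)
        (by linarith : (0:ℝ) ≤ 1 - γ) (by linarith)
      have hmul : (1 + x) ^ γ * (1 + x) ^ (1 - γ) = 1 + x := by
        rw [← Real.rpow_add h1x]; norm_num
      have hden : (0:ℝ) < 1 + (1 - γ) * x := by nlinarith
      have h3 : 1 + x ≤ (1 + x) ^ γ * (1 + (1 - γ) * x) := by
        calc 1 + x = (1 + x) ^ γ * (1 + x) ^ (1 - γ) := hmul.symm
          _ ≤ (1 + x) ^ γ * (1 + (1 - γ) * x) :=
            mul_le_mul_of_nonneg_left hb hA.le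
      -- ((1+x)^γ - 1) * (1 + (1-γ)x) ≥ γ x
      have h4 : γ * x ≤ ((1 + x) ^ γ - 1) * (1 + (1 - γ) * x) := by nlinarith
      have h5 : (0:ℝ) ≤ (1 + x) ^ γ - 1 := by
        have := Real.one_le_rpow (by linarith : (1:ℝ) ≤ 1 + x) hγ.le
        linarith
      have h6 : 1 + (1 - γ) * x ≤ 1 + K := by nlinarith
      have h7 : γ * x ≤ ((1 + x) ^ γ - 1) * (1 + K) := by nlinarith
      rw [div_le_iff₀ h1K]
      linarith
  have e1 : (1 + K) ^ (-(γ + 1)) = ((1 + K) ^ γ * (1 + K))⁻¹ := by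
    rw [Real.rpow_neg h1K.le, Real.rpow_add h1K, Real.rpow_one]
  have e2 : (1 + x) ^ (-γ) = ((1 + x) ^ γ)⁻¹ := Real.rpow_neg h1x.le γ
  rw [e1, e2]
  have hBinv : ((1 + K) ^ γ)⁻¹ ≤ ((1 + x) ^ γ)⁻¹ := by
    apply inv_anti₀ hA hAB
  calc γ * ((1 + K) ^ γ * (1 + K))⁻¹ * x
      = (γ * x / (1 + K)) * ((1 + K) ^ γ)⁻¹ := by rw [mul_inv]; ring
    _ ≤ (γ * x / (1 + K)) * ((1 + x) ^ γ)⁻¹ :=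
        mul_le_mul_of_nonneg_left hBinv (by positivity)
    _ ≤ ((1 + x) ^ γ - 1) * ((1 + x) ^ γ)⁻¹ :=
        mul_le_mul_of_nonneg_right hcore (by positivity)
    _ = 1 - ((1 + x) ^ γ)⁻¹ := by field_simp

private lemma discrete_decay (a : ℕ → ℝ) (C γ : ℝ) (hC : 0 < C) (hγ : 0 < γ)
    (ha : ∀ m, 0 ≤ a m)
    (hrec : ∀ m, a (m + 1) ≤ a m - C * a (m + 1) ^ (1 + γ)) :
    ∃ M : ℝ, 0 < M ∧ ∀ m : ℕ, a m ≤ M * ((m : ℝ) + 1) ^ (-(1 / γ)) := by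
  have hmono : ∀ m, a (m + 1) ≤ a m := by
    intro m
    have := hrec m
    have h2 : 0 ≤ C * a (m + 1) ^ (1 + γ) := mul_nonneg hC.le (Real.rpow_nonneg (ha _) _)
    linarith
  have hA0 : ∀ m, a m ≤ a 0 := by
    intro m
    induction m with
    | zero => exact le_rfl
    | succ n ih => exact (hmono n).trans ih
  rcases eq_or_lt_of_le (ha 0) with h0 | h0
  · refine ⟨1, one_pos, fun m => ?_⟩
    have h1 : a m ≤ 0 := (hA0 m).trans_eq h0.symm
    have : (0:ℝ) < ((m:ℝ) + 1) ^ (-(1 / γ)) :=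
      Real.rpow_pos_of_pos (by positivity) _
    linarith
  · -- a 0 > 0
    set K := C * a 0 ^ γ with hK
    have hKpos : 0 < K := by positivity
    set c := C * γ * (1 + K) ^ (-(γ + 1)) with hc
    have hcpos : 0 < c := by positivity
    have claim : ∀ m, 0 < a m → a 0 ^ (-γ) + c * m ≤ a m ^ (-γ) := by
      intro m
      induction m with
      | zero => intro _; simp
      | succ n ih =>
        intro hpos
        set u := a (n + 1) with hu
        have hurec := hrec n
        have hupow : 0 < C * u ^ (1 + γ) := by positivity
        have hvpos : 0 < a n := lt_of_lt_of_le (by linarith) (by linarith : u + C * u ^ (1+γ) ≤ a n)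
        have ihn := ih hvpos
        -- x := C * u ^ γ
        set x := C * u ^ γ with hx
        have hxpos : 0 < x := by positivity
        have hxK : x ≤ K := by
          have : u ^ γ ≤ a 0 ^ γ := Real.rpow_le_rpow (ha _) (hA0 _) hγ.le
          rw [hx, hK]
          exact mul_le_mul_of_nonneg_left this hC.le
        have hsplit : u ^ (1 + γ) = u * u ^ γ := by
          rw [Real.rpow_add hpos, Real.rpow_one]
        have hvlow : u * (1 + x) ≤ a n := by
          have := hrec n
          rw [hsplit] at this
          nlinarith
        have hulow : 0 < u * (1 + x) := by positivity
        have h1 : a n ^ (-γ) ≤ (u * (1 + x)) ^ (-γ) :=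
          Real.rpow_le_rpow_of_nonpos hulow hvlow (by linarith)
        have h2 : (u * (1 + x)) ^ (-γ) = u ^ (-γ) * (1 + x) ^ (-γ) :=
          Real.mul_rpow hpos.le (by positivity)
        have hkey := key_ineq hγ hxpos.le hxK
        -- u^(-γ) * (1 - (1+x)^(-γ)) ≥ u^(-γ) * (γ (1+K)^(-(γ+1)) x) = c
        have hun : 0 < u ^ (-γ) := Real.rpow_pos_of_pos hpos _
        have h3 : u ^ (-γ) * (γ * (1 + K) ^ (-(γ + 1)) * x) ≤
            u ^ (-γ) * (1 - (1 + x) ^ (-γ)) :=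
          mul_le_mul_of_nonneg_left hkey hun.le
        have hid : u ^ (-γ) * x = C := by
          rw [hx, Real.rpow_neg hpos.le]
          field_simp
        have h4 : u ^ (-γ) * (γ * (1 + K) ^ (-(γ + 1)) * x) = c := by
          rw [hc]
          have : u ^ (-γ) * (γ * (1 + K) ^ (-(γ + 1)) * x)
              = (u ^ (-γ) * x) * (γ * (1 + K) ^ (-(γ + 1))) := by ring
          rw [this, hid]; ring
        have h5 : c ≤ u ^ (-γ) - u ^ (-γ) * (1 + x) ^ (-γ) := by
          rw [← h4]; linarith [h3]
        have h6 : a n ^ (-γ) + c ≤ u ^ (-γ) := by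
          have := h1
          rw [h2] at this
          linarith
        push_cast
        linarith
    -- conclude
    set d := min (a 0 ^ (-γ)) c with hd
    have hdpos : 0 < d := lt_min (Real.rpow_pos_of_pos h0 _) hcpos
    refine ⟨d ^ (-(1 / γ)), Real.rpow_pos_of_pos hdpos _, fun m => ?_⟩
    rcases eq_or_lt_of_le (ha m) with hz | hz
    · have : (0:ℝ) < d ^ (-(1/γ)) * ((m:ℝ) + 1) ^ (-(1 / γ)) := by
        have := Real.rpow_pos_of_pos (show (0:ℝ) < (m:ℝ)+1 by positivity) (-(1/γ))
        positivity
      linarith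
    · have hcl := claim m hz
      have hlb : d * ((m:ℝ) + 1) ≤ a m ^ (-γ) := by
        have h1 : d ≤ a 0 ^ (-γ) := min_le_left _ _
        have h2 : d ≤ c := min_le_right _ _
        have : d * ((m:ℝ) + 1) = d + d * m := by ring
        rw [this]
        have hm0 : (0:ℝ) ≤ m := Nat.cast_nonneg m
        nlinarith
      have hdm : 0 < d * ((m:ℝ) + 1) := by positivity
      have h7 : (a m ^ (-γ)) ^ (-(1/γ)) ≤ (d * ((m:ℝ) + 1)) ^ (-(1/γ)) :=
        Real.rpow_le_rpow_of_nonpos hdm hlb (neg_nonpos.mpr (by positivity))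
      have h8 : (a m ^ (-γ)) ^ (-(1/γ)) = a m := by
        rw [← Real.rpow_mul (ha m)]
        have he : -γ * -(1 / γ) = 1 := by field_simp
        rw [he, Real.rpow_one]
      have h9 : (d * ((m:ℝ) + 1)) ^ (-(1/γ))
          = d ^ (-(1/γ)) * ((m:ℝ) + 1) ^ (-(1/γ)) :=
        Real.mul_rpow hdpos.le (by positivity)
      rw [← h8, ← h9]
      exact h7

/-- continuous-time version of the discrete decay lemma: a nonincreasing
nonnegative `F` with `F(t+σ) ≤ F(t) - C F(t+σ)^{2+α}` decays like `(t+1)^{-1/(1+α)}`. -/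
theorem statement15 (F : ℝ → ℝ) (C α σ : ℝ) (hC : 0 < C) (hα : -1 < α) (hσ : 0 < σ)
    (hF0 : ∀ t : ℝ, 0 ≤ t → 0 ≤ F t)
    (hmono : ∀ s t : ℝ, 0 ≤ s → s ≤ t → F t ≤ F s)
    (hrec : ∀ t : ℝ, 0 ≤ t → F (t + σ) ≤ F t - C * F (t + σ) ^ (2 + α)) :
    ∃ M : ℝ, 0 < M ∧ ∀ t : ℝ, 0 ≤ t →
      F t ≤ M * (t + 1) ^ (-(1 : ℝ) / (1 + α)) := by
  have hγ : 0 < 1 + α := by linarith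
  set γ := 1 + α with hγdef
  set a : ℕ → ℝ := fun m => F (m * σ) with hadef
  have haNN : ∀ m : ℕ, 0 ≤ a m := fun m => hF0 _ (by positivity)
  have hrecD : ∀ m : ℕ, a (m + 1) ≤ a m - C * a (m + 1) ^ (1 + γ) := by
    intro m
    have h := hrec ((m : ℝ) * σ) (by positivity)
    have e1 : ((m : ℝ) + 1) * σ = (m : ℝ) * σ + σ := by ring
    have e2 : (2 : ℝ) + α = 1 + γ := by rw [hγdef]; ring
    simp only [hadef]
    push_cast
    rw [e1, ← e2]
    exact h
  obtain ⟨M, hM, hMa⟩ := discrete_decay a C γ hC hγ haNN hrecD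
  refine ⟨M * (σ + 1) ^ (1 / γ), by positivity, fun t ht => ?_⟩
  set m := ⌊t / σ⌋₊ with hm
  have hms : (m : ℝ) * σ ≤ t := by
    have h1 : (m : ℝ) ≤ t / σ := Nat.floor_le (div_nonneg ht hσ.le)
    calc (m : ℝ) * σ ≤ (t / σ) * σ := mul_le_mul_of_nonneg_right h1 hσ.le
      _ = t := by field_simp
  have hts : t < ((m : ℝ) + 1) * σ := by
    have h1 : t / σ < (m : ℝ) + 1 := Nat.lt_floor_add_one (t / σ)
    calc t = (t / σ) * σ := by field_simp
      _ < ((m : ℝ) + 1) * σ := by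
        exact mul_lt_mul_of_pos_right h1 hσ
  have hFam : F t ≤ a m := hmono _ t (by positivity) hms
  have hcomp : t + 1 ≤ (σ + 1) * ((m : ℝ) + 1) := by
    have hm0 : (0 : ℝ) ≤ (m : ℝ) := Nat.cast_nonneg m
    nlinarith
  have hβ : (0 : ℝ) < 1 / γ := by positivity
  have hApos : (0 : ℝ) < ((m : ℝ) + 1) ^ (1 / γ) := Real.rpow_pos_of_pos (by positivity) _
  have hBpos : (0 : ℝ) < (t + 1) ^ (1 / γ) := Real.rpow_pos_of_pos (by linarith) _
  have hcpos : (0 : ℝ) < (σ + 1) ^ (1 / γ) := Real.rpow_pos_of_pos (by linarith) _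
  have hBcA : (t + 1) ^ (1 / γ) ≤ (σ + 1) ^ (1 / γ) * ((m : ℝ) + 1) ^ (1 / γ) := by
    calc (t + 1) ^ (1 / γ) ≤ ((σ + 1) * ((m : ℝ) + 1)) ^ (1 / γ) :=
          Real.rpow_le_rpow (by linarith) hcomp hβ.le
      _ = (σ + 1) ^ (1 / γ) * ((m : ℝ) + 1) ^ (1 / γ) :=
          Real.mul_rpow (by linarith) (by positivity)
  have hinv : (((m : ℝ) + 1) ^ (1 / γ))⁻¹ ≤ (σ + 1) ^ (1 / γ) * ((t + 1) ^ (1 / γ))⁻¹ := by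
    have h1 : ((σ + 1) ^ (1 / γ) * ((m : ℝ) + 1) ^ (1 / γ))⁻¹ ≤ ((t + 1) ^ (1 / γ))⁻¹ :=
      inv_anti₀ hBpos hBcA
    have h2 : (((m : ℝ) + 1) ^ (1 / γ))⁻¹
        = (σ + 1) ^ (1 / γ) * ((σ + 1) ^ (1 / γ) * ((m : ℝ) + 1) ^ (1 / γ))⁻¹ := by
      rw [mul_inv]
      field_simp
    rw [h2]
    exact mul_le_mul_of_nonneg_left h1 hcpos.le
  have e3 : -(1 : ℝ) / (1 + α) = -(1 / γ) := by rw [hγdef, neg_div]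
  rw [e3, Real.rpow_neg (by linarith : (0:ℝ) ≤ t + 1)]
  have e4 : ((m : ℝ) + 1) ^ (-(1 / γ)) = (((m : ℝ) + 1) ^ (1 / γ))⁻¹ :=
    Real.rpow_neg (by positivity) _
  have e5 : (t + 1) ^ (-(1 / γ)) = ((t + 1) ^ (1 / γ))⁻¹ :=
    Real.rpow_neg (by linarith) _
  calc F t ≤ a m := hFam
    _ ≤ M * ((m : ℝ) + 1) ^ (-(1 / γ)) := hMa m
    _ = M * (((m : ℝ) + 1) ^ (1 / γ))⁻¹ := by rw [e4]
    _ ≤ M * ((σ + 1) ^ (1 / γ) * ((t + 1) ^ (1 / γ))⁻¹) :=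
        mul_le_mul_of_nonneg_left hinv hM.le
    _ = M * (σ + 1) ^ (1 / γ) * ((t + 1) ^ (1 / γ))⁻¹ := by ring


end SlowDecayLQ
end
end
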